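/- Let A be an n×n symmetric positive definite real matrix that is ultrametric. Then the inverse of A is a weakly diagonally dominant Stieltjes matrix (every symmetric positive definite ultrametric matrix is the inverse of a weakly diagonally dominant M-matrix). -/

import Mathlib

open Matrix Finset
open scoped RealInnerProductSpace

noncomputable section

/-- The vertex Gramian of the simplex with vertices `v` associated with vertex `v ℓ`. -/
def vGram {n : ℕ} (v : Fin (n + 1) → EuclideanSpace ℝ (Fin n)) (ℓ : Fin (n + 1)) :
    Matrix {k : Fin (n + 1) // k ≠ ℓ} {k : Fin (n + 1) // k ≠ ℓ} ℝ :=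
  Matrix.of fun i j => ⟪v i.1 - v ℓ, v j.1 - v ℓ⟫

/-- A Stieltjes matrix: symmetric positive definite with nonpositive off-diagonal entries. -/
def IsStieltjes {ι : Type*} [Fintype ι] (M : Matrix ι ι ℝ) : Prop :=
  M.PosDef ∧ ∀ i j, i ≠ j → M i j ≤ 0

/-- Weakly diagonally dominant: `M e ≥ 0` entrywise for the all-ones vector `e`. -/
def IsWDD {ι : Type*} [Fintype ι] (M : Matrix ι ι ℝ) : Prop :=
  ∀ i, 0 ≤ ∑ j, M i j

/-- Pointwise weakly diagonally dominant: each diagonal entry is maximal in its row. -/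
def PWDD {ι : Type*} (M : Matrix ι ι ℝ) : Prop :=
  ∀ i j, M i j ≤ M i i

/-- The orthogonal projection of `x` onto the affine span of `{v k : k ∈ s}`
lies in the convex hull of `{v k : k ∈ s}`. -/
def ProjInHull {n : ℕ} (x : EuclideanSpace ℝ (Fin n))
    (v : Fin (n + 1) → EuclideanSpace ℝ (Fin n)) (s : Set (Fin (n + 1))) : Prop :=
  ∃ p ∈ convexHull ℝ (v '' s), ∀ a ∈ s, ∀ b ∈ s, ⟪x - p, v a - v b⟫ = 0

/-- All facets of the simplex are nonobtuse: each vertex `v i` projects, for each `j ≠ i`,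
into the convex hull of the vertices other than `v i, v j`. -/
def FacetsNonobtuse {n : ℕ} (v : Fin (n + 1) → EuclideanSpace ℝ (Fin n)) : Prop :=
  ∀ i j : Fin (n + 1), i ≠ j → ProjInHull (v i) v {k | k ≠ i ∧ k ≠ j}

/-- `q` is an inward normal to the facet opposite `v j`. -/
def IsInwardNormal {n : ℕ} (v : Fin (n + 1) → EuclideanSpace ℝ (Fin n)) (j : Fin (n + 1))
    (q : EuclideanSpace ℝ (Fin n)) : Prop :=
  q ≠ 0 ∧ (∀ a b : Fin (n + 1), a ≠ j → b ≠ j → ⟪q, v a - v b⟫ = 0) ∧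
    ∀ k : Fin (n + 1), k ≠ j → 0 < ⟪q, v j - v k⟫

/-- The `j`-th column of `A` is a blocking column: no off-diagonal entry of column `j`
is minimal in its row. -/
def IsBlockingCol {ι : Type*} (A : Matrix ι ι ℝ) (j : ι) : Prop :=
  ∀ i, i ≠ j → ∃ k, A i k < A i j

/-- `A` is nonblocking: every column has an off-diagonal entry minimal in its row. -/
def IsNonblocking {ι : Type*} (A : Matrix ι ι ℝ) : Prop :=
  ∀ j, ∃ i, i ≠ j ∧ ∀ k, A i j ≤ A i k

/-- A (symmetric nonnegative) ultrametric matrix. -/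
def IsUltra {ι : Type*} (A : Matrix ι ι ℝ) : Prop :=
  (∀ i j, 0 ≤ A i j) ∧ (∀ i j, A i j ≤ A i i) ∧ ∀ i j k, min (A i k) (A k j) ≤ A i j

/-- The principal submatrix of `A` with rows and columns restricted to `s`. -/
def subMat {ι : Type*} (A : Matrix ι ι ℝ) (s : Finset ι) :
    Matrix {x // x ∈ s} {x // x ∈ s} ℝ :=
  A.submatrix (fun i => i.1) (fun j => j.1)

/-- The principal submatrix of `A` obtained by deleting row and column `m`. -/
def delMat {ι : Type*} (A : Matrix ι ι ℝ) (m : ι) : Matrix {i // i ≠ m} {i // i ≠ m} ℝ :=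
  A.submatrix (fun i => i.1) (fun j => j.1)

section Tetra

variable {V : Type*} [NormedAddCommGroup V] [InnerProductSpace ℝ V]

/-- The triangle with vertices `a, b, c` is nonobtuse. -/
def NonobtuseTri (a b c : V) : Prop :=
  0 ≤ ⟪b - a, c - a⟫ ∧ 0 ≤ ⟪a - b, c - b⟫ ∧ 0 ≤ ⟪a - c, b - c⟫

/-- The sub-orthocentric set of the triangle `a b c`: the union over the vertices of the
closed segments from the vertex to the orthocenter. -/
def SubOrthoSet (a b c : V) : Set V :=
  {x | ∃ h, h ∈ affineSpan ℝ ({a, b, c} : Set V) ∧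
    ⟪h - a, b - c⟫ = 0 ∧ ⟪h - b, a - c⟫ = 0 ∧
    (x ∈ segment ℝ a h ∨ x ∈ segment ℝ b h ∨ x ∈ segment ℝ c h)}

/-- `p` is the orthogonal projection of `x` onto the affine span of `{a, b, c}`. -/
def IsOrthProjTri (x p a b c : V) : Prop :=
  p ∈ affineSpan ℝ ({a, b, c} : Set V) ∧ ⟪x - p, b - a⟫ = 0 ∧ ⟪x - p, c - a⟫ = 0

/-- A sub-orthocentric tetrahedron: all triangular faces are nonobtuse and each vertex
projects orthogonally into the sub-orthocentric set of its opposite face. -/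
def IsSubOrthoTetra (w : Fin 4 → V) : Prop :=
  ∀ i : Fin 4,
    NonobtuseTri (w (i.succAbove 0)) (w (i.succAbove 1)) (w (i.succAbove 2)) ∧
    ∃ p, IsOrthProjTri (w i) p (w (i.succAbove 0)) (w (i.succAbove 1)) (w (i.succAbove 2)) ∧
      p ∈ SubOrthoSet (w (i.succAbove 0)) (w (i.succAbove 1)) (w (i.succAbove 2))

end Tetra

section AuxUltra

abbrev UltraGood {ι : Type} [Fintype ι] [DecidableEq ι] (A : Matrix ι ι ℝ) : Prop :=
  (∀ i, 0 ≤ (A⁻¹ *ᵥ 1) i) ∧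
  (∀ t : ℝ, 0 ≤ t → (∀ a b, t ≤ A a b) → t * ((1 : ι → ℝ) ⬝ᵥ (A⁻¹ *ᵥ 1)) ≤ 1) ∧
  (∀ i j, i ≠ j → A⁻¹ i j ≤ 0) ∧
  (∀ i j, i ≠ j → ∀ t : ℝ, 0 ≤ t → (∀ a b, t ≤ A a b) →
    (1 - t * ((1 : ι → ℝ) ⬝ᵥ (A⁻¹ *ᵥ 1))) * A⁻¹ i j
      + t * ((A⁻¹ *ᵥ 1) i * (A⁻¹ *ᵥ 1) j) ≤ 0)


lemma mul_vecMulVec' {m n p : Type*} [Fintype n] (A : Matrix m n ℝ) (u : n → ℝ) (w : p → ℝ) :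
    A * vecMulVec u w = vecMulVec (A *ᵥ u) w := by
  ext i j
  simp only [Matrix.mul_apply, vecMulVec_apply, Matrix.mulVec, dotProduct,
    Finset.sum_mul]
  exact Finset.sum_congr rfl fun k _ => by ring

lemma vecMulVec_mul' {m n p : Type*} [Fintype n] (a : m → ℝ) (b : n → ℝ) (M : Matrix n p ℝ) :
    vecMulVec a b * M = vecMulVec a (Mᵀ *ᵥ b) := by
  ext i j
  simp only [Matrix.mul_apply, vecMulVec_apply, Matrix.mulVec, dotProduct,
    Matrix.transpose_apply, Finset.mul_sum]
  exact Finset.sum_congr rfl fun k _ => by ring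

lemma vecMulVec_smul_left {m p : Type*} (s : ℝ) (a : m → ℝ) (b : p → ℝ) :
    vecMulVec (s • a) b = s • vecMulVec a b := by
  ext i j
  simp only [vecMulVec_apply, Matrix.smul_apply, Pi.smul_apply, smul_eq_mul]
  ring

lemma block_inv {ιS ιT : Type*} [Fintype ιS] [Fintype ιT] [DecidableEq ιS] [DecidableEq ιT]
    (B : Matrix ιS ιS ℝ) (C : Matrix ιT ιT ℝ) (τ δ : ℝ) (u : ιS → ℝ) (v : ιT → ℝ)
    (hBu : B *ᵥ u = 1) (hCv : C *ᵥ v = 1) (hBi : B * B⁻¹ = 1) (hCi : C * C⁻¹ = 1)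
    (hBit : (B⁻¹) *ᵥ (1 : ιS → ℝ) = u) (hCit : (C⁻¹) *ᵥ (1 : ιT → ℝ) = v)
    (hBsym : Bᵀ = B) (hCsym : Cᵀ = C)
    (hδ : δ = 1 - τ ^ 2 * (∑ i, u i) * (∑ i, v i)) (hδ0 : δ ≠ 0) :
    (fromBlocks B (Matrix.of fun _ _ => τ) (Matrix.of fun _ _ => τ) C) *
      (fromBlocks (B⁻¹ + (τ * (∑ i, v i) * (τ / δ)) • vecMulVec u u)
        ((-(τ / δ)) • vecMulVec u v)
        ((-(τ / δ)) • vecMulVec v u)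
        (C⁻¹ + (τ * (∑ i, u i) * (τ / δ)) • vecMulVec v v)) = 1 := by
  have hBinvT : (B⁻¹)ᵀ = B⁻¹ := by rw [Matrix.transpose_nonsing_inv, hBsym]
  have hCinvT : (C⁻¹)ᵀ = C⁻¹ := by rw [Matrix.transpose_nonsing_inv, hCsym]
  set σB := ∑ i, u i with hσB
  set σC := ∑ i, v i with hσC
  set KS : Matrix ιS ιT ℝ := Matrix.of fun _ _ => τ with hKSdef
  set KT : Matrix ιT ιS ℝ := Matrix.of fun _ _ => τ with hKTdef
  clear_value σB σC KS KT
  have hKS : KS = τ • vecMulVec (1 : ιS → ℝ) (1 : ιT → ℝ) := by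
    ext i j; simp [hKSdef, vecMulVec_apply]
  have hKT : KT = τ • vecMulVec (1 : ιT → ℝ) (1 : ιS → ℝ) := by
    ext i j; simp [hKTdef, vecMulVec_apply]
  have hKSv : KS *ᵥ v = (τ * σC) • (1 : ιS → ℝ) := by
    ext i
    simp only [hKSdef, Matrix.mulVec, dotProduct, Matrix.of_apply, Pi.smul_apply,
      Pi.one_apply, smul_eq_mul, mul_one, ← Finset.mul_sum, hσC]
  have hKTu : KT *ᵥ u = (τ * σB) • (1 : ιT → ℝ) := by
    ext i
    simp only [hKTdef, Matrix.mulVec, dotProduct, Matrix.of_apply, Pi.smul_apply,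
      Pi.one_apply, smul_eq_mul, mul_one, ← Finset.mul_sum, hσB]
  have hBuu : B * vecMulVec u u = vecMulVec 1 u := by rw [mul_vecMulVec', hBu]
  have hBuv : B * vecMulVec u v = vecMulVec 1 v := by rw [mul_vecMulVec', hBu]
  have hCvv : C * vecMulVec v v = vecMulVec 1 v := by rw [mul_vecMulVec', hCv]
  have hCvu : C * vecMulVec v u = vecMulVec 1 u := by rw [mul_vecMulVec', hCv]
  have hKSvu : KS * vecMulVec v u = (τ * σC) • vecMulVec 1 u := by
    rw [mul_vecMulVec', hKSv, vecMulVec_smul_left]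
  have hKSvv : KS * vecMulVec v v = (τ * σC) • vecMulVec 1 v := by
    rw [mul_vecMulVec', hKSv, vecMulVec_smul_left]
  have hKTuu : KT * vecMulVec u u = (τ * σB) • vecMulVec 1 u := by
    rw [mul_vecMulVec', hKTu, vecMulVec_smul_left]
  have hKTuv : KT * vecMulVec u v = (τ * σB) • vecMulVec 1 v := by
    rw [mul_vecMulVec', hKTu, vecMulVec_smul_left]
  have hKSC : KS * C⁻¹ = τ • vecMulVec 1 v := by
    rw [hKS, Matrix.smul_mul, vecMulVec_mul', hCinvT, hCit]
  have hKTB : KT * B⁻¹ = τ • vecMulVec 1 u := by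
    rw [hKT, Matrix.smul_mul, vecMulVec_mul', hBinvT, hBit]
  have e11 : B * (B⁻¹ + (τ * σC * (τ / δ)) • vecMulVec u u)
      + KS * ((-(τ / δ)) • vecMulVec v u) = 1 := by
    rw [Matrix.mul_add, hBi, Matrix.mul_smul, hBuu, Matrix.mul_smul, hKSvu]
    match_scalars <;> ring
  have e12 : B * ((-(τ / δ)) • vecMulVec u v)
      + KS * (C⁻¹ + (τ * σB * (τ / δ)) • vecMulVec v v) = 0 := by
    rw [Matrix.mul_smul, hBuv, Matrix.mul_add, hKSC, Matrix.mul_smul, hKSvv]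
    match_scalars <;> field_simp <;>
      (first
        | ring1
        | linear_combination τ * hδ
        | linear_combination (τ * δ) * hδ
        | linear_combination (τ * δ - τ) * hδ)
  have e21 : KT * (B⁻¹ + (τ * σC * (τ / δ)) • vecMulVec u u)
      + C * ((-(τ / δ)) • vecMulVec v u) = 0 := by
    rw [Matrix.mul_add, hKTB, Matrix.mul_smul, hKTuu, Matrix.mul_smul, hCvu]
    match_scalars <;> field_simp <;>
      (first
        | ring1
        | linear_combination τ * hδ
        | linear_combination (τ * δ) * hδ
        | linear_combination (τ * δ - τ) * hδ)
  have e22 : KT * ((-(τ / δ)) • vecMulVec u v)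
      + C * (C⁻¹ + (τ * σB * (τ / δ)) • vecMulVec v v) = 1 := by
    rw [Matrix.mul_smul, hKTuv, Matrix.mul_add, hCi, Matrix.mul_smul, hCvv]
    match_scalars <;> ring
  rw [Matrix.fromBlocks_multiply, e11, e12, e21, e22, Matrix.fromBlocks_one]


lemma posDef_submatrix_inj {ι κ : Type*} [Fintype ι] [Fintype κ] {A : Matrix ι ι ℝ}
    (hA : A.PosDef) (f : κ → ι) (hf : Function.Injective f) :
    (A.submatrix f f).PosDef := by
  classical
  have herm : (A.submatrix f f).IsHermitian := by
    ext i j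
    have h1 := congrFun (congrFun hA.1 (f i)) (f j)
    simpa [Matrix.conjTranspose_apply] using h1
  refine Matrix.PosDef.of_dotProduct_mulVec_pos herm fun x hx => ?_
  set y : ι → ℝ := Function.extend f x 0 with hy
  have hyf : ∀ k, y (f k) = x k := fun k => hf.extend_apply x 0 k
  have hy0 : ∀ i, i ∉ Finset.univ.image f → y i = 0 := by
    intro i hi
    rw [hy, Function.extend_apply']
    · rfl
    · rintro ⟨k, rfl⟩; exact hi (Finset.mem_image_of_mem f (Finset.mem_univ k))
  have hsum : ∀ g : ι → ℝ, ∑ i, y i * g i = ∑ k, x k * g (f k) := by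
    intro g
    rw [← Finset.sum_subset (Finset.subset_univ (Finset.univ.image f))
        (fun i _ hi => by rw [hy0 i hi, zero_mul])]
    rw [Finset.sum_image (fun a _ b _ h => hf h)]
    exact Finset.sum_congr rfl fun k _ => by rw [hyf]
  have hyne : y ≠ 0 := by
    obtain ⟨k, hk⟩ := Function.ne_iff.mp hx
    intro h
    exact hk (by rw [← hyf k, h]; rfl)
  have hq := hA.dotProduct_mulVec_pos hyne
  have hval : (star y) ⬝ᵥ (A *ᵥ y) = (star x) ⬝ᵥ ((A.submatrix f f) *ᵥ x) := by
    simp only [star_trivial, dotProduct, Matrix.mulVec, Matrix.submatrix_apply]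
    rw [hsum]
    refine Finset.sum_congr rfl fun k _ => ?_
    congr 1
    calc ∑ j, A (f k) j * y j = ∑ j, y j * A (f k) j := by
          exact Finset.sum_congr rfl fun j _ => mul_comm _ _
      _ = ∑ l, x l * A (f k) (f l) := hsum _
      _ = ∑ l, A (f k) (f l) * x l := Finset.sum_congr rfl fun l _ => mul_comm _ _
  rwa [hval] at hq


lemma key_sub {ι : Type} [Fintype ι] [DecidableEq ι] (hss : Subsingleton ι)
    (A : Matrix ι ι ℝ) (hpd : A.PosDef) : UltraGood A := by
  rcases isEmpty_or_nonempty ι with he | hne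
  · refine ⟨fun i => (IsEmpty.false i).elim, ?_, fun i => (IsEmpty.false i).elim,
      fun i => (IsEmpty.false i).elim⟩
    intro t ht _
    simp [one_dotProduct]
  · obtain ⟨i₀⟩ := hne
    have huniv : (Finset.univ : Finset ι) = {i₀} :=
      Finset.eq_singleton_iff_unique_mem.mpr
        ⟨Finset.mem_univ _, fun x _ => Subsingleton.elim x i₀⟩
    have hdet : IsUnit A.det := isUnit_iff_ne_zero.mpr hpd.det_pos.ne'
    have hAA := Matrix.mul_nonsing_inv A hdet
    have h1 : A i₀ i₀ * A⁻¹ i₀ i₀ = 1 := by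
      have h := congrFun (congrFun hAA i₀) i₀
      rwa [Matrix.mul_apply, huniv, Finset.sum_singleton, Matrix.one_apply_eq] at h
    have hApos : 0 < A i₀ i₀ := by
      have h := hpd.dotProduct_mulVec_pos (x := Pi.single i₀ 1) (by
        intro hz
        have := congrFun hz i₀
        simp at this)
      simpa [dotProduct, huniv, Matrix.mulVec, Pi.single_apply] using h
    have hIpos : 0 < A⁻¹ i₀ i₀ := by nlinarith
    have hw : ∀ i, (A⁻¹ *ᵥ (1 : ι → ℝ)) i = A⁻¹ i₀ i₀ := by
      intro i
      rw [Subsingleton.elim i i₀]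
      simp [Matrix.mulVec, dotProduct, huniv]
    have hσ : (1 : ι → ℝ) ⬝ᵥ (A⁻¹ *ᵥ 1) = A⁻¹ i₀ i₀ := by
      rw [one_dotProduct, huniv, Finset.sum_singleton, hw]

    refine ⟨fun i => by rw [hw]; exact hIpos.le, ?_, ?_, ?_⟩
    · intro t ht hta
      rw [hσ]
      have := hta i₀ i₀
      nlinarith
    · intro i j hij
      exact absurd (Subsingleton.elim i j) hij
    · intro i j hij
      exact absurd (Subsingleton.elim i j) hij


lemma scalB (τ σB σC Bij m : ℝ) (hδpos : 0 < 1 - τ ^ 2 * σB * σC)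
    (hτσC : τ * σC ≤ 1) (hτσB : τ * σB ≤ 1) (hτ0 : 0 ≤ τ) (hσC0 : 0 ≤ σC)
    (hm : 0 ≤ m) (hb : Bij ≤ 0) (hc : (1 - τ * σB) * Bij + τ * m ≤ 0) :
    Bij + τ * σC * (τ / (1 - τ ^ 2 * σB * σC)) * m ≤ 0 := by
  have h0 : (1 : ℝ) - τ ^ 2 * σB * σC ≠ 0 := hδpos.ne'
  have hXδ : (1 - τ ^ 2 * σB * σC) * (Bij + τ * σC * (τ / (1 - τ ^ 2 * σB * σC)) * m)
      = (1 - τ ^ 2 * σB * σC) * Bij + τ ^ 2 * σC * m := by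
    field_simp
  have p1 : 0 ≤ τ * σC * (-((1 - τ * σB) * Bij + τ * m)) :=
    mul_nonneg (mul_nonneg hτ0 hσC0) (by linarith)
  have p2 : 0 ≤ (1 - τ * σC) * (-Bij) := mul_nonneg (by linarith) (by linarith)
  nlinarith [hXδ, p1, p2, hδpos]

lemma scalSS (τ δ σB σC σA Bij x y : ℝ) (hδ : δ = 1 - τ ^ 2 * σB * σC) (hδpos : 0 < δ)
    (hσA : σA = (1 - τ * σC) / δ * σB + (1 - τ * σB) / δ * σC)
    (hτσC : τ * σC ≤ 1) (hτ0 : 0 ≤ τ)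
    (hc : (1 - τ * σB) * Bij + τ * (x * y) ≤ 0) :
    (1 - τ * σA) * (Bij + τ * σC * (τ / δ) * (x * y))
      + τ * ((1 - τ * σC) / δ * x * ((1 - τ * σC) / δ * y)) ≤ 0 := by
  subst hσA
  subst hδ
  have h0 : (1 : ℝ) - τ ^ 2 * σB * σC ≠ 0 := hδpos.ne'
  have hid : (1 - τ * ((1 - τ * σC) / (1 - τ ^ 2 * σB * σC) * σB
        + (1 - τ * σB) / (1 - τ ^ 2 * σB * σC) * σC))
        * (Bij + τ * σC * (τ / (1 - τ ^ 2 * σB * σC)) * (x * y))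
      + τ * ((1 - τ * σC) / (1 - τ ^ 2 * σB * σC) * x
        * ((1 - τ * σC) / (1 - τ ^ 2 * σB * σC) * y))
      = (1 - τ * σC) / (1 - τ ^ 2 * σB * σC) * ((1 - τ * σB) * Bij + τ * (x * y)) := by
    have h0' : (1 : ℝ) - τ ^ 2 * σC * σB ≠ 0 := by rw [show τ ^ 2 * σC * σB = τ ^ 2 * σB * σC by ring]; exact h0
    field_simp
    ring
  rw [hid]
  have hK : 0 ≤ (1 - τ * σC) / (1 - τ ^ 2 * σB * σC) :=
    div_nonneg (by linarith) hδpos.le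
  nlinarith [mul_nonneg hK (neg_nonneg.mpr hc)]

lemma scalST (τ δ σB σC σA x y : ℝ) (hδ : δ = 1 - τ ^ 2 * σB * σC) (hδpos : 0 < δ)
    (hσA : σA = (1 - τ * σC) / δ * σB + (1 - τ * σB) / δ * σC) :
    (1 - τ * σA) * (-((τ / δ) * (x * y)))
      + τ * ((1 - τ * σC) / δ * x * ((1 - τ * σB) / δ * y)) = 0 := by
  subst hσA
  subst hδ
  have h0 : (1 : ℝ) - τ ^ 2 * σB * σC ≠ 0 := hδpos.ne'
  have h0' : (1 : ℝ) - τ ^ 2 * σC * σB ≠ 0 := by rw [show τ ^ 2 * σC * σB = τ ^ 2 * σB * σC by ring]; exact h0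
  field_simp
  ring

lemma ultra_key : ∀ (N : ℕ) (ι : Type) [Fintype ι] [DecidableEq ι] (A : Matrix ι ι ℝ),
    Fintype.card ι ≤ N → A.PosDef → IsUltra A → UltraGood A := by
  intro N
  induction N with
  | zero =>
    intro ι _ _ A hcard hpd _
    haveI : IsEmpty ι := Fintype.card_eq_zero_iff.mp (Nat.le_zero.mp hcard)
    exact key_sub (by infer_instance) A hpd
  | succ N IH =>
    intro ι instF instD A hcard hpd hu
    by_cases hss : Fintype.card ι ≤ 1
    · exact key_sub (Fintype.card_le_one_iff_subsingleton.mp hss) A hpd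
    have hbig : 1 < Fintype.card ι := not_le.mp hss
    haveI hne : Nonempty ι := Fintype.card_pos_iff.mp (by omega)
    have hsym : ∀ i j, A i j = A j i := by
      intro i j
      have h := congrFun (congrFun hpd.1 j) i
      simpa [Matrix.conjTranspose_apply] using h
    obtain ⟨⟨a₀, b₀⟩, -, hmin⟩ :=
      Finset.exists_min_image (Finset.univ : Finset (ι × ι)) (fun q => A q.1 q.2)
        Finset.univ_nonempty
    have hmin' : ∀ i j, A a₀ b₀ ≤ A i j := fun i j => hmin (i, j) (Finset.mem_univ _)
    obtain ⟨a, b, hab, hτab⟩ : ∃ a b, a ≠ b ∧ A a b = A a₀ b₀ := by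
      by_cases h : a₀ = b₀
      · obtain ⟨c, hc⟩ := Fintype.exists_ne_of_one_lt_card hbig a₀
        refine ⟨a₀, c, fun h' => hc h'.symm, le_antisymm ?_ (hmin' _ _)⟩
        calc A a₀ c ≤ A a₀ a₀ := hu.2.1 a₀ c
          _ = A a₀ b₀ := by rw [← h]
      · exact ⟨a₀, b₀, h, rfl⟩
    set τ := A a₀ b₀ with hτdef
    have hτ0 : 0 ≤ τ := hu.1 a₀ b₀
    set p : ι → Prop := fun k => k = a ∨ τ < A a k with hpdef
    haveI : DecidablePred p := Classical.decPred p
    have hpa : p a := Or.inl rfl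
    have hpb : ¬ p b := by
      rintro (h | h)
      · exact hab h.symm
      · rw [hτab] at h; exact lt_irrefl _ h
    have hcross : ∀ i j, p i → ¬ p j → A i j = τ := by
      intro i j hi hj
      have hj' : ¬ (j = a ∨ τ < A a j) := hj
      push_neg at hj'
      obtain ⟨hj1, hj2⟩ := hj'
      refine le_antisymm ?_ (hmin' i j)
      have hi' : i = a ∨ τ < A a i := hi
      rcases hi' with rfl | hi'
      · exact hj2
      · by_contra hgt
        push_neg at hgt
        have h5 : τ < min (A a i) (A i j) := lt_min hi' hgt
        have h6 := lt_of_lt_of_le h5 (hu.2.2 a j i)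
        exact absurd hj2 (not_le.mpr h6)
    have hcross' : ∀ i j, ¬ p i → p j → A i j = τ := fun i j hi hj => by
      rw [hsym]; exact hcross j i hj hi
    -- blocks
    set B : Matrix {k // p k} {k // p k} ℝ := A.submatrix Subtype.val Subtype.val with hBdef
    set C : Matrix {k // ¬ p k} {k // ¬ p k} ℝ := A.submatrix Subtype.val Subtype.val with hCdef
    have hBpd : B.PosDef := posDef_submatrix_inj hpd _ Subtype.val_injective
    have hCpd : C.PosDef := posDef_submatrix_inj hpd _ Subtype.val_injective
    have hBultra : IsUltra B :=
      ⟨fun i j => hu.1 _ _, fun i j => hu.2.1 _ _, fun i j k => hu.2.2 _ _ _⟩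
    have hCultra : IsUltra C :=
      ⟨fun i j => hu.1 _ _, fun i j => hu.2.1 _ _, fun i j k => hu.2.2 _ _ _⟩
    have hcardS : Fintype.card {k // p k} ≤ N := by
      have := Fintype.card_subtype_lt (p := p) (x := b) hpb
      omega
    have hcardT : Fintype.card {k // ¬ p k} ≤ N := by
      have hlt : Fintype.card {k // ¬ p k} < Fintype.card ι :=
        Fintype.card_subtype_lt (x := a) (not_not.mpr hpa)
      omega
    obtain ⟨haB, hdB, hbB, hcB⟩ := IH _ B hcardS hBpd hBultra
    obtain ⟨haC, hdC, hbC, hcC⟩ := IH _ C hcardT hCpd hCultra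
    -- vectors and scalars
    have hBdet : IsUnit B.det := isUnit_iff_ne_zero.mpr hBpd.det_pos.ne'
    have hCdet : IsUnit C.det := isUnit_iff_ne_zero.mpr hCpd.det_pos.ne'
    have hBi : B * B⁻¹ = 1 := Matrix.mul_nonsing_inv _ hBdet
    have hCi : C * C⁻¹ = 1 := Matrix.mul_nonsing_inv _ hCdet
    set u : {k // p k} → ℝ := B⁻¹ *ᵥ 1 with hudef
    set v : {k // ¬ p k} → ℝ := C⁻¹ *ᵥ 1 with hvdef
    set σB : ℝ := ∑ i, u i with hσBdef
    set σC : ℝ := ∑ i, v i with hσCdef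
    set δ : ℝ := 1 - τ ^ 2 * σB * σC with hδdef
    have hBu : B *ᵥ u = 1 := by rw [hudef, Matrix.mulVec_mulVec, hBi, Matrix.one_mulVec]
    have hCv : C *ᵥ v = 1 := by rw [hvdef, Matrix.mulVec_mulVec, hCi, Matrix.one_mulVec]
    have hBsym : Bᵀ = B := by ext i j; exact hsym _ _
    have hCsym : Cᵀ = C := by ext i j; exact hsym _ _
    have hu0 : ∀ i, 0 ≤ u i := haB
    have hv0 : ∀ i, 0 ≤ v i := haC
    have hσBpos : 0 < σB := by
      have hone : (1 : {k // p k} → ℝ) ≠ 0 := by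
        intro hz; have := congrFun hz ⟨a, hpa⟩; simp at this
      have h := hBpd.inv.dotProduct_mulVec_pos hone
      rw [hσBdef, hudef]
      simpa [one_dotProduct] using h
    have hσCpos : 0 < σC := by
      have hone : (1 : {k // ¬ p k} → ℝ) ≠ 0 := by
        intro hz; have := congrFun hz ⟨b, hpb⟩; simp at this
      have h := hCpd.inv.dotProduct_mulVec_pos hone
      rw [hσCdef, hvdef]
      simpa [one_dotProduct] using h
    have hτσB : τ * σB ≤ 1 := by
      have h := hdB τ hτ0 (fun x y => hmin' _ _)
      rw [one_dotProduct] at h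
      rwa [← hσBdef] at h
    have hτσC : τ * σC ≤ 1 := by
      have h := hdC τ hτ0 (fun x y => hmin' _ _)
      rw [one_dotProduct] at h
      rwa [← hσCdef] at h
    have hcB' : ∀ i j, i ≠ j → (1 - τ * σB) * B⁻¹ i j + τ * (u i * u j) ≤ 0 := by
      intro i j hij
      have h := hcB i j hij τ hτ0 (fun x y => hmin' _ _)
      rw [one_dotProduct] at h
      rwa [← hσBdef] at h
    have hcC' : ∀ i j, i ≠ j → (1 - τ * σC) * C⁻¹ i j + τ * (v i * v j) ≤ 0 := by
      intro i j hij
      have h := hcC i j hij τ hτ0 (fun x y => hmin' _ _)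
      rw [one_dotProduct] at h
      rwa [← hσCdef] at h
    -- the equivalence and block form
    set eqv := Equiv.sumCompl p with heqvdef
    have hA'eq : A.submatrix eqv eqv
        = fromBlocks B (Matrix.of fun _ _ => τ) (Matrix.of fun _ _ => τ) C := by
      ext i j
      rcases i with i | i <;> rcases j with j | j <;>
          simp only [Matrix.submatrix_apply, heqvdef, Equiv.sumCompl_apply_inl,
            Equiv.sumCompl_apply_inr, Matrix.fromBlocks_apply₁₁, Matrix.fromBlocks_apply₁₂,
            Matrix.fromBlocks_apply₂₁, Matrix.fromBlocks_apply₂₂, Matrix.of_apply, hBdef,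
            hCdef] <;>
        first
          | rfl
          | exact hcross _ _ i.2 j.2
          | exact hcross' _ _ i.2 j.2
    have hA'pd : (A.submatrix eqv eqv).PosDef :=
      posDef_submatrix_inj hpd _ (Equiv.injective _)
    -- positivity of δ
    have hvne : v ≠ 0 := by
      intro h
      have : σC = 0 := by rw [hσCdef, h]; simp
      linarith
    have hδpos : 0 < δ := by
      set z : ({k // p k} ⊕ {k // ¬ p k}) → ℝ := Sum.elim ((τ * σC) • u) (-v) with hzdef
      have hzne : z ≠ 0 := by
        intro h
        apply hvne
        funext j
        have := congrFun h (Sum.inr j)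
        simpa [hzdef, neg_eq_zero] using this
      have h2 : (Matrix.of (fun _ _ => τ) : Matrix {k // p k} {k // ¬ p k} ℝ) *ᵥ (-v)
          = -((τ * σC) • (1 : {k // p k} → ℝ)) := by
        ext i
        simp only [Matrix.mulVec, dotProduct, Matrix.of_apply, Pi.neg_apply,
          Pi.smul_apply, Pi.one_apply, smul_eq_mul, mul_one, mul_neg, hσCdef]
        rw [Finset.mul_sum, ← Finset.sum_neg_distrib]
      have h3 : (Matrix.of (fun _ _ => τ) : Matrix {k // ¬ p k} {k // p k} ℝ)
          *ᵥ ((τ * σC) • u) = (τ * σC * (τ * σB)) • (1 : {k // ¬ p k} → ℝ) := by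
        ext i
        simp only [Matrix.mulVec, dotProduct, Matrix.of_apply, Pi.smul_apply,
          Pi.one_apply, smul_eq_mul, mul_one, hσBdef]
        rw [← Finset.mul_sum, ← Finset.mul_sum]
        ring
      have hmv : (A.submatrix eqv eqv) *ᵥ z
          = Sum.elim (0 : {k // p k} → ℝ) ((-δ) • (1 : {k // ¬ p k} → ℝ)) := by
        rw [hA'eq, hzdef, Matrix.fromBlocks_mulVec]
        simp only [Sum.elim_comp_inl, Sum.elim_comp_inr]
        rw [Matrix.mulVec_smul, hBu, h2, h3, Matrix.mulVec_neg, hCv]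
        funext x
        rcases x with i | i
        · simp
        · simp only [Sum.elim_inr, Pi.add_apply, Pi.smul_apply, Pi.neg_apply, Pi.one_apply,
            smul_eq_mul, mul_one, hδdef]
          ring
      have hstar : star z = z := by funext i; simp
      have hdp : star z ⬝ᵥ ((A.submatrix eqv eqv) *ᵥ z) = σC * δ := by
        rw [hstar, hmv, hzdef, sumElim_dotProduct_sumElim]
        simp [dotProduct_smul, neg_dotProduct, dotProduct_one,
          dotProduct_zero, ← hσCdef]
        ring
      have hq := hA'pd.dotProduct_mulVec_pos hzne
      rw [hdp] at hq
      nlinarith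
    have hδ0' : (1 : ℝ) - τ ^ 2 * σB * σC ≠ 0 := by rw [← hδdef]; exact hδpos.ne'
    -- the inverse via block formula
    have hMul := block_inv B C τ δ u v hBu hCv hBi hCi hudef.symm hvdef.symm hBsym hCsym
      (by rw [hδdef, hσBdef, hσCdef]) hδpos.ne'
    have hInv : A⁻¹.submatrix eqv eqv
        = fromBlocks (B⁻¹ + (τ * σC * (τ / δ)) • vecMulVec u u)
            ((-(τ / δ)) • vecMulVec u v)
            ((-(τ / δ)) • vecMulVec v u)
            (C⁻¹ + (τ * σB * (τ / δ)) • vecMulVec v v) := by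
      rw [← Matrix.inv_submatrix_equiv A eqv eqv, hA'eq]
      exact Matrix.inv_eq_right_inv hMul
    have hESS : ∀ s t', A⁻¹ (eqv (Sum.inl s)) (eqv (Sum.inl t'))
        = B⁻¹ s t' + (τ * σC * (τ / δ)) * (u s * u t') := by
      intro s t'
      have h := congrFun (congrFun hInv (Sum.inl s)) (Sum.inl t')
      simpa [Matrix.fromBlocks_apply₁₁, vecMulVec_apply] using h
    have hEST : ∀ s t', A⁻¹ (eqv (Sum.inl s)) (eqv (Sum.inr t'))
        = -((τ / δ) * (u s * v t')) := by
      intro s t'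
      have h := congrFun (congrFun hInv (Sum.inl s)) (Sum.inr t')
      simpa [Matrix.fromBlocks_apply₁₂, vecMulVec_apply] using h
    have hETS : ∀ s t', A⁻¹ (eqv (Sum.inr s)) (eqv (Sum.inl t'))
        = -((τ / δ) * (v s * u t')) := by
      intro s t'
      have h := congrFun (congrFun hInv (Sum.inr s)) (Sum.inl t')
      simpa [Matrix.fromBlocks_apply₂₁, vecMulVec_apply] using h
    have hETT : ∀ s t', A⁻¹ (eqv (Sum.inr s)) (eqv (Sum.inr t'))
        = C⁻¹ s t' + (τ * σB * (τ / δ)) * (v s * v t') := by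
      intro s t'
      have h := congrFun (congrFun hInv (Sum.inr s)) (Sum.inr t')
      simpa [Matrix.fromBlocks_apply₂₂, vecMulVec_apply] using h
    clear_value τ u v σB σC δ
    -- row-sum formulas
    have husum : ∀ s, u s = ∑ j, B⁻¹ s j := by
      intro s; rw [hudef]; simp [Matrix.mulVec, dotProduct]
    have hvsum : ∀ s, v s = ∑ j, C⁻¹ s j := by
      intro s; rw [hvdef]; simp [Matrix.mulVec, dotProduct]
    have hwS : ∀ s, (A⁻¹ *ᵥ (1 : ι → ℝ)) (eqv (Sum.inl s)) = (1 - τ * σC) / δ * u s := by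
      intro s
      have h0 : (A⁻¹ *ᵥ (1 : ι → ℝ)) (eqv (Sum.inl s)) = ∑ j, A⁻¹ (eqv (Sum.inl s)) j := by
        simp [Matrix.mulVec, dotProduct]
      rw [h0, ← Equiv.sum_comp eqv (fun j => A⁻¹ (eqv (Sum.inl s)) j), Fintype.sum_sum_type]
      simp only [hESS, hEST]
      have e1 : ∑ j : {k // p k}, (B⁻¹ s j + τ * σC * (τ / δ) * (u s * u j))
          = u s + τ * σC * (τ / δ) * (u s * σB) := by
        rw [Finset.sum_add_distrib, ← husum s, ← Finset.mul_sum, ← Finset.mul_sum, ← hσBdef]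
      have e2 : ∑ j : {k // ¬ p k}, -(τ / δ * (u s * v j)) = -(τ / δ * (u s * σC)) := by
        rw [Finset.sum_neg_distrib, ← Finset.mul_sum, ← Finset.mul_sum, ← hσCdef]
      rw [e1, e2, hδdef]
      have h0' : (1 : ℝ) - τ ^ 2 * σC * σB ≠ 0 := by rw [show τ ^ 2 * σC * σB = τ ^ 2 * σB * σC by ring, ← hδdef]; exact hδpos.ne'
      field_simp
      ring
    have hwT : ∀ s, (A⁻¹ *ᵥ (1 : ι → ℝ)) (eqv (Sum.inr s)) = (1 - τ * σB) / δ * v s := by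
      intro s
      have h0 : (A⁻¹ *ᵥ (1 : ι → ℝ)) (eqv (Sum.inr s)) = ∑ j, A⁻¹ (eqv (Sum.inr s)) j := by
        simp [Matrix.mulVec, dotProduct]
      rw [h0, ← Equiv.sum_comp eqv (fun j => A⁻¹ (eqv (Sum.inr s)) j), Fintype.sum_sum_type]
      simp only [hETS, hETT]
      have e1 : ∑ j : {k // ¬ p k}, (C⁻¹ s j + τ * σB * (τ / δ) * (v s * v j))
          = v s + τ * σB * (τ / δ) * (v s * σC) := by
        rw [Finset.sum_add_distrib, ← hvsum s, ← Finset.mul_sum, ← Finset.mul_sum, ← hσCdef]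
      have e2 : ∑ j : {k // p k}, -(τ / δ * (v s * u j)) = -(τ / δ * (v s * σB)) := by
        rw [Finset.sum_neg_distrib, ← Finset.mul_sum, ← Finset.mul_sum, ← hσBdef]
      rw [e1, e2, hδdef]
      have h0' : (1 : ℝ) - τ ^ 2 * σC * σB ≠ 0 := by rw [show τ ^ 2 * σC * σB = τ ^ 2 * σB * σC by ring, ← hδdef]; exact hδpos.ne'
      field_simp
      ring
    have hσAval : (1 : ι → ℝ) ⬝ᵥ (A⁻¹ *ᵥ 1)
        = (1 - τ * σC) / δ * σB + (1 - τ * σB) / δ * σC := by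
      rw [one_dotProduct, ← Equiv.sum_comp eqv (fun i => (A⁻¹ *ᵥ (1 : ι → ℝ)) i),
        Fintype.sum_sum_type]
      simp only [hwS, hwT]
      rw [← Finset.mul_sum, ← Finset.mul_sum, ← hσBdef, ← hσCdef]
    have hK1 : 0 ≤ (1 - τ * σC) / δ := div_nonneg (by linarith) hδpos.le
    have hK2 : 0 ≤ (1 - τ * σB) / δ := div_nonneg (by linarith) hδpos.le
    have hσA0 : 0 ≤ (1 : ι → ℝ) ⬝ᵥ (A⁻¹ *ᵥ 1) := by
      rw [hσAval]
      nlinarith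
    have GA : ∀ i, 0 ≤ (A⁻¹ *ᵥ (1 : ι → ℝ)) i := by
      intro i
      rw [show i = eqv (eqv.symm i) from (Equiv.apply_symm_apply eqv i).symm]
      rcases hsi : eqv.symm i with s | s
      · rw [hwS]; exact mul_nonneg hK1 (hu0 s)
      · rw [hwT]; exact mul_nonneg hK2 (hv0 s)
    have GD : ∀ t : ℝ, 0 ≤ t → (∀ x y, t ≤ A x y) →
        t * ((1 : ι → ℝ) ⬝ᵥ (A⁻¹ *ᵥ 1)) ≤ 1 := by
      intro t ht hta
      have htτ : t ≤ τ := by rw [hτdef]; exact hta a₀ b₀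
      have hτσA : τ * ((1 : ι → ℝ) ⬝ᵥ (A⁻¹ *ᵥ 1)) ≤ 1 := by
        rw [hσAval]
        have hident : τ * ((1 - τ * σC) / δ * σB + (1 - τ * σB) / δ * σC)
            = (τ * σB * (1 - τ * σC) + τ * σC * (1 - τ * σB)) / δ := by
          ring
        rw [hident, div_le_one hδpos, hδdef]
        nlinarith [mul_nonneg (sub_nonneg.mpr hτσB) (sub_nonneg.mpr hτσC)]
      calc t * ((1 : ι → ℝ) ⬝ᵥ (A⁻¹ *ᵥ 1)) ≤ τ * ((1 : ι → ℝ) ⬝ᵥ (A⁻¹ *ᵥ 1)) :=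
            mul_le_mul_of_nonneg_right htτ hσA0
        _ ≤ 1 := hτσA
    have GB : ∀ i j, i ≠ j → A⁻¹ i j ≤ 0 := by
      intro i j hij
      have hijE : eqv.symm i ≠ eqv.symm j := fun h => hij (eqv.symm.injective h)
      rw [show i = eqv (eqv.symm i) from (Equiv.apply_symm_apply eqv i).symm,
        show j = eqv (eqv.symm j) from (Equiv.apply_symm_apply eqv j).symm]
      rcases hsi : eqv.symm i with s | s <;> rcases hsj : eqv.symm j with s' | s'
      · have hne' : s ≠ s' := fun h => hijE (by rw [hsi, hsj, h])
        rw [hESS]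
        have h := scalB τ σB σC (B⁻¹ s s') (u s * u s') (by rw [← hδdef]; exact hδpos)
          hτσC hτσB hτ0 hσCpos.le (mul_nonneg (hu0 s) (hu0 s')) (hbB s s' hne')
          (hcB' s s' hne')
        rw [← hδdef] at h
        exact h
      · rw [hEST]
        have := mul_nonneg (div_nonneg hτ0 hδpos.le) (mul_nonneg (hu0 s) (hv0 s'))
        linarith
      · rw [hETS]
        have := mul_nonneg (div_nonneg hτ0 hδpos.le) (mul_nonneg (hv0 s) (hu0 s'))
        linarith
      · have hne' : s ≠ s' := fun h => hijE (by rw [hsi, hsj, h])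
        rw [hETT]
        have h := scalB τ σC σB (C⁻¹ s s') (v s * v s')
          (by rw [show (1:ℝ) - τ ^ 2 * σC * σB = δ by rw [hδdef]; ring]; exact hδpos)
          hτσB hτσC hτ0 hσBpos.le (mul_nonneg (hv0 s) (hv0 s')) (hbC s s' hne')
          (hcC' s s' hne')
        rw [show (1:ℝ) - τ ^ 2 * σC * σB = δ by rw [hδdef]; ring] at h
        exact h
    have hσA' : (1 : ι → ℝ) ⬝ᵥ (A⁻¹ *ᵥ 1)
        = (1 - τ * σB) / δ * σC + (1 - τ * σC) / δ * σB := by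
      rw [hσAval]; ring
    have hδ2 : δ = 1 - τ ^ 2 * σC * σB := by rw [hδdef]; ring
    have GCτ : ∀ i j, i ≠ j →
        (1 - τ * ((1 : ι → ℝ) ⬝ᵥ (A⁻¹ *ᵥ 1))) * A⁻¹ i j
          + τ * ((A⁻¹ *ᵥ (1 : ι → ℝ)) i * (A⁻¹ *ᵥ (1 : ι → ℝ)) j) ≤ 0 := by
      intro i j hij
      have hijE : eqv.symm i ≠ eqv.symm j := fun h => hij (eqv.symm.injective h)
      rw [show i = eqv (eqv.symm i) from (Equiv.apply_symm_apply eqv i).symm,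
        show j = eqv (eqv.symm j) from (Equiv.apply_symm_apply eqv j).symm]
      rcases hsi : eqv.symm i with s | s <;> rcases hsj : eqv.symm j with s' | s'
      · have hne' : s ≠ s' := fun h => hijE (by rw [hsi, hsj, h])
        rw [hESS, hwS, hwS]
        exact scalSS τ δ σB σC _ (B⁻¹ s s') (u s) (u s') hδdef hδpos hσAval hτσC hτ0
          (hcB' s s' hne')
      · rw [hEST, hwS, hwT]
        exact le_of_eq (scalST τ δ σB σC _ (u s) (v s') hδdef hδpos hσAval)
      · rw [hETS, hwT, hwS]
        exact le_of_eq (scalST τ δ σC σB _ (v s) (u s') hδ2 hδpos hσA')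
      · have hne' : s ≠ s' := fun h => hijE (by rw [hsi, hsj, h])
        rw [hETT, hwT, hwT]
        exact scalSS τ δ σC σB _ (C⁻¹ s s') (v s) (v s') hδ2 hδpos hσA' hτσB hτ0
          (hcC' s s' hne')
    have GC : ∀ i j, i ≠ j → ∀ t : ℝ, 0 ≤ t → (∀ x y, t ≤ A x y) →
        (1 - t * ((1 : ι → ℝ) ⬝ᵥ (A⁻¹ *ᵥ 1))) * A⁻¹ i j
          + t * ((A⁻¹ *ᵥ (1 : ι → ℝ)) i * (A⁻¹ *ᵥ (1 : ι → ℝ)) j) ≤ 0 := by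
      intro i j hij t ht hta
      have htτ : t ≤ τ := by rw [hτdef]; exact hta a₀ b₀
      have h1 := GCτ i j hij
      have h2 := GB i j hij
      have h3 := GA i
      have h4 := GA j
      generalize hgσ : ((1 : ι → ℝ) ⬝ᵥ (A⁻¹ *ᵥ 1)) = σZ at h1 hσA0 ⊢
      generalize hgw : (A⁻¹ *ᵥ (1 : ι → ℝ)) i = wi at h1 h3 ⊢
      generalize hgw' : (A⁻¹ *ᵥ (1 : ι → ℝ)) j = wj at h1 h4 ⊢
      generalize hgX : A⁻¹ i j = X at h1 h2 ⊢
      have c0 : 0 ≤ wi * wj - σZ * X := by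
        nlinarith only [mul_nonneg h3 h4, hσA0, h2]
      nlinarith only [h1, mul_nonneg (sub_nonneg.mpr htτ) c0]
    exact ⟨GA, GD, GB, GC⟩




end AuxUltra

theorem stmt15 (n : ℕ) (A : Matrix (Fin n) (Fin n) ℝ) (hpd : A.PosDef) (hu : IsUltra A) :
    IsStieltjes A⁻¹ ∧ IsWDD A⁻¹ := by
  obtain ⟨ha, hd, hb, hc⟩ := ultra_key (Fintype.card (Fin n)) (Fin n) A le_rfl hpd hu
  refine ⟨⟨hpd.inv, hb⟩, ?_⟩
  intro i
  simpa [Matrix.mulVec, dotProduct] using ha i
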